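/- Fix a word P over a complementary alphabet. The graph G_P whose vertices are the P-valid plane trees and whose edges connect trees differing by a single valid local move is connected. -/

import Mathlib

/-!
Model: a plane tree with n edges is encoded as a non-crossing perfect matching
on the 2n half-edge positions 0,…,2n-1 (0-indexed); a matched pair (i,j) with
i < j is the edge e(i,j) with left half-edge i and right half-edge j.
-/

/-- `M` is a perfect matching on positions `0,…,2n-1`. -/
def IsMatching (n : ℕ) (M : Finset (ℕ × ℕ)) : Prop :=
  (∀ p ∈ M, p.1 < p.2 ∧ p.2 < 2 * n) ∧
  (∀ k, k < 2 * n → ∃! p, p ∈ M ∧ (p.1 = k ∨ p.2 = k))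

/-- No two matched pairs cross. -/
def NonCrossing (M : Finset (ℕ × ℕ)) : Prop :=
  ∀ p ∈ M, ∀ q ∈ M, ¬ (p.1 < q.1 ∧ q.1 < p.2 ∧ p.2 < q.2)

/-- A plane tree on `n` edges: a non-crossing perfect matching on `0,…,2n-1`. -/
def IsPlaneTree (n : ℕ) (M : Finset (ℕ × ℕ)) : Prop :=
  IsMatching n M ∧ NonCrossing M

/-- The plane tree `M` is valid for the word `P` (with complementation `comp`):
every matched pair consists of complementary letters. -/
def IsValid {A : Type*} (P : ℕ → A) (comp : A → A) (M : Finset (ℕ × ℕ)) : Prop :=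
  ∀ p ∈ M, P p.2 = comp (P p.1)

/-- A local move of type 2: two nested *adjacent* edges `e(i,j')`, `e(j,i')`
with `i < j < i' < j'` (adjacency: no edge lies strictly between them, i.e. no
edge `(a,b)` with `i < a < j` and `i' < b < j'`) are replaced by `e(i,j)` and
`e(i',j')`. -/
def Type2Move (M M' : Finset (ℕ × ℕ)) : Prop :=
  ∃ i j i' j', i < j ∧ j < i' ∧ i' < j' ∧
    (i, j') ∈ M ∧ (j, i') ∈ M ∧
    (¬ ∃ q ∈ M, i < q.1 ∧ q.1 < j ∧ i' < q.2 ∧ q.2 < j') ∧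
    M' = insert (i, j) (insert (i', j') ((M.erase (i, j')).erase (j, i')))

/-- A valid local move of type 2: a type 2 move whose initial and resulting
plane trees are both `P`-valid. -/
def ValidType2Move {A : Type*} (P : ℕ → A) (comp : A → A)
    (M M' : Finset (ℕ × ℕ)) : Prop :=
  Type2Move M M' ∧ IsValid P comp M ∧ IsValid P comp M'


section Connectivity

variable {A : Type*}

/-- A perfect matching whose edge endpoints are exactly the positions in `F`. -/
def MatchOn (F : Finset ℕ) (M : Finset (ℕ × ℕ)) : Prop :=
  (∀ p ∈ M, p.1 < p.2 ∧ p.1 ∈ F ∧ p.2 ∈ F) ∧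
  (∀ k ∈ F, ∃! p, p ∈ M ∧ (p.1 = k ∨ p.2 = k))

/-- One undirected valid-move step between noncrossing matchings on `F`. -/
def Step (P : ℕ → A) (comp : A → A) (F : Finset ℕ) (X Y : Finset (ℕ × ℕ)) : Prop :=
  MatchOn F X ∧ NonCrossing X ∧ MatchOn F Y ∧ NonCrossing Y ∧
  (ValidType2Move P comp X Y ∨ ValidType2Move P comp Y X)

lemma hit_unique {F : Finset ℕ} {M : Finset (ℕ × ℕ)} (hM : MatchOn F M)
    {p q : ℕ × ℕ} (hp : p ∈ M) (hq : q ∈ M) {k : ℕ}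
    (hpk : p.1 = k ∨ p.2 = k) (hqk : q.1 = k ∨ q.2 = k) : p = q := by
  have hkF : k ∈ F := by
    rcases hpk with h | h
    · exact h ▸ (hM.1 p hp).2.1
    · exact h ▸ (hM.1 p hp).2.2
  obtain ⟨u, -, hu⟩ := hM.2 k hkF
  rw [hu p ⟨hp, hpk⟩, hu q ⟨hq, hqk⟩]

lemma exists_hit {F : Finset ℕ} {M : Finset (ℕ × ℕ)} (hM : MatchOn F M)
    {k : ℕ} (hk : k ∈ F) : ∃ p ∈ M, p.1 = k ∨ p.2 = k := by
  obtain ⟨p, hp, -⟩ := hM.2 k hk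
  exact ⟨p, hp.1, hp.2⟩

lemma not_hit {F : Finset ℕ} {M : Finset (ℕ × ℕ)} (hM : MatchOn F M)
    {p q : ℕ × ℕ} (hp : p ∈ M) (hq : q ∈ M) (hne : q ≠ p) {k : ℕ}
    (hpk : p.1 = k ∨ p.2 = k) : q.1 ≠ k ∧ q.2 ≠ k :=
  ⟨fun h => hne (hit_unique hM hq hp (Or.inl h) hpk),
   fun h => hne (hit_unique hM hq hp (Or.inr h) hpk)⟩

lemma rewire {F : Finset ℕ} {M : Finset (ℕ × ℕ)} (hM : MatchOn F M)
    {e1 e2 : ℕ × ℕ} (he1 : e1 ∈ M) (he2 : e2 ∈ M) (hne : e1 ≠ e2)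
    {c1 c2 d1 d2 : ℕ} (hf1 : c1 < c2) (hf2 : d1 < d2)
    (hcov : ∀ k, (c1 = k ∨ c2 = k ∨ d1 = k ∨ d2 = k) ↔
        (e1.1 = k ∨ e1.2 = k ∨ e2.1 = k ∨ e2.2 = k))
    (hd : c1 ≠ d1 ∧ c1 ≠ d2 ∧ c2 ≠ d1 ∧ c2 ≠ d2) :
    MatchOn F (insert (c1, c2) (insert (d1, d2) ((M.erase e1).erase e2))) := by
  obtain ⟨hd1, hd2, hd3, hd4⟩ := hd
  have hkF : ∀ k, (e1.1 = k ∨ e1.2 = k ∨ e2.1 = k ∨ e2.2 = k) → k ∈ F := by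
    rintro k (h | h | h | h)
    exacts [h ▸ (hM.1 e1 he1).2.1, h ▸ (hM.1 e1 he1).2.2,
      h ▸ (hM.1 e2 he2).2.1, h ▸ (hM.1 e2 he2).2.2]
  have hM0 : ∀ q ∈ (M.erase e1).erase e2, q ∈ M ∧ q ≠ e1 ∧ q ≠ e2 := by
    intro q hq
    have h2 := Finset.mem_erase.1 hq
    have h1 := Finset.mem_erase.1 h2.2
    exact ⟨h1.2, h1.1, h2.1⟩
  have hnotouch : ∀ q ∈ (M.erase e1).erase e2, ∀ k : ℕ,
      (c1 = k ∨ c2 = k ∨ d1 = k ∨ d2 = k) → ¬(q.1 = k ∨ q.2 = k) := by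
    intro q hq k hk hqk
    obtain ⟨hqM, hq1, hq2⟩ := hM0 q hq
    rcases (hcov k).1 hk with h | h | h | h
    · exact hq1 (hit_unique hM hqM he1 hqk (Or.inl h))
    · exact hq1 (hit_unique hM hqM he1 hqk (Or.inr h))
    · exact hq2 (hit_unique hM hqM he2 hqk (Or.inl h))
    · exact hq2 (hit_unique hM hqM he2 hqk (Or.inr h))
  constructor
  · intro p hp
    rcases Finset.mem_insert.1 hp with rfl | hp
    · exact ⟨hf1, hkF _ ((hcov _).1 (Or.inl rfl)), hkF _ ((hcov _).1 (Or.inr (Or.inl rfl)))⟩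
    rcases Finset.mem_insert.1 hp with rfl | hp
    · exact ⟨hf2, hkF _ ((hcov _).1 (Or.inr (Or.inr (Or.inl rfl)))),
        hkF _ ((hcov _).1 (Or.inr (Or.inr (Or.inr rfl))))⟩
    · exact hM.1 p (hM0 p hp).1
  · intro k hk
    by_cases hk4 : c1 = k ∨ c2 = k ∨ d1 = k ∨ d2 = k
    · by_cases hkf1 : c1 = k ∨ c2 = k
      · refine ⟨(c1, c2), ⟨Finset.mem_insert_self _ _, hkf1⟩, ?_⟩
        rintro q ⟨hq, hqk⟩
        rcases Finset.mem_insert.1 hq with rfl | hq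
        · rfl
        rcases Finset.mem_insert.1 hq with rfl | hq
        · exfalso
          have hqk' : d1 = k ∨ d2 = k := hqk
          rcases hkf1 with h | h <;> rcases hqk' with h' | h' <;> omega
        · exact absurd hqk (hnotouch q hq k (by tauto))
      · have hkf2 : d1 = k ∨ d2 = k := by tauto
        refine ⟨(d1, d2), ⟨Finset.mem_insert_of_mem (Finset.mem_insert_self _ _), hkf2⟩, ?_⟩
        rintro q ⟨hq, hqk⟩
        rcases Finset.mem_insert.1 hq with rfl | hq
        · exfalso
          have hqk' : c1 = k ∨ c2 = k := hqk
          tauto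
        rcases Finset.mem_insert.1 hq with rfl | hq
        · rfl
        · exact absurd hqk (hnotouch q hq k (by tauto))
    · have hke : ¬(e1.1 = k ∨ e1.2 = k ∨ e2.1 = k ∨ e2.2 = k) := fun h => hk4 ((hcov k).2 h)
      obtain ⟨p0, hp0, hp0u⟩ := hM.2 k hk
      have hp0' : p0 ∈ (M.erase e1).erase e2 := by
        refine Finset.mem_erase.2 ⟨?_, Finset.mem_erase.2 ⟨?_, hp0.1⟩⟩
        · rintro rfl; exact hke (by tauto)
        · rintro rfl; exact hke (by tauto)
      refine ⟨p0, ⟨Finset.mem_insert_of_mem (Finset.mem_insert_of_mem hp0'), hp0.2⟩, ?_⟩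
      rintro q ⟨hq, hqk⟩
      rcases Finset.mem_insert.1 hq with rfl | hq
      · exfalso
        have hqk' : c1 = k ∨ c2 = k := hqk
        tauto
      rcases Finset.mem_insert.1 hq with rfl | hq
      · exfalso
        have hqk' : d1 = k ∨ d2 = k := hqk
        tauto
      · exact hp0u q ⟨(hM0 q hq).1, hqk⟩

end Connectivity

section Connectivity2

variable {A : Type*} {P : ℕ → A} {comp : A → A}

lemma matchon_erase {F : Finset ℕ} {M : Finset (ℕ × ℕ)} {x y : ℕ}
    (hM : MatchOn F M) (hxy : (x, y) ∈ M) :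
    MatchOn ((F.erase x).erase y) (M.erase (x, y)) := by
  constructor
  · intro p hp
    obtain ⟨hpne, hpM⟩ := Finset.mem_erase.1 hp
    have h1 := hM.1 p hpM
    have hxx : p.1 ≠ x ∧ p.2 ≠ x := not_hit hM hxy hpM hpne (Or.inl rfl)
    have hyy : p.1 ≠ y ∧ p.2 ≠ y := not_hit hM hxy hpM hpne (Or.inr rfl)
    exact ⟨h1.1, Finset.mem_erase.2 ⟨hyy.1, Finset.mem_erase.2 ⟨hxx.1, h1.2.1⟩⟩,
      Finset.mem_erase.2 ⟨hyy.2, Finset.mem_erase.2 ⟨hxx.2, h1.2.2⟩⟩⟩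
  · intro k hk
    have hky : k ≠ y := (Finset.mem_erase.1 hk).1
    have hkx : k ≠ x := (Finset.mem_erase.1 (Finset.mem_erase.1 hk).2).1
    have hkF : k ∈ F := (Finset.mem_erase.1 (Finset.mem_erase.1 hk).2).2
    obtain ⟨p0, hp0, hp0u⟩ := hM.2 k hkF
    have hp0ne : p0 ≠ (x, y) := by
      rintro rfl
      have h : x = k ∨ y = k := hp0.2
      rcases h with h | h
      · exact hkx h.symm
      · exact hky h.symm
    refine ⟨p0, ⟨Finset.mem_erase.2 ⟨hp0ne, hp0.1⟩, hp0.2⟩, ?_⟩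
    rintro q ⟨hq, hqk⟩
    exact hp0u q ⟨(Finset.mem_erase.1 hq).2, hqk⟩

lemma matchon_insert {F : Finset ℕ} {X : Finset (ℕ × ℕ)} {x y : ℕ}
    (hx : x ∈ F) (hy : y ∈ F) (hxy : x < y)
    (hX : MatchOn ((F.erase x).erase y) X) :
    MatchOn F (insert (x, y) X) := by
  have havoid : ∀ p ∈ X, p.1 ≠ x ∧ p.1 ≠ y ∧ p.2 ≠ x ∧ p.2 ≠ y := by
    intro p hp
    have h := hX.1 p hp
    have h1 := Finset.mem_erase.1 h.2.1
    have h2 := Finset.mem_erase.1 h1.2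
    have h3 := Finset.mem_erase.1 h.2.2
    have h4 := Finset.mem_erase.1 h3.2
    exact ⟨h2.1, h1.1, h4.1, h3.1⟩
  constructor
  · intro p hp
    rcases Finset.mem_insert.1 hp with rfl | hp
    · exact ⟨hxy, hx, hy⟩
    · have h := hX.1 p hp
      exact ⟨h.1, (Finset.mem_erase.1 (Finset.mem_erase.1 h.2.1).2).2,
        (Finset.mem_erase.1 (Finset.mem_erase.1 h.2.2).2).2⟩
  · intro k hk
    by_cases hkxy : k = x ∨ k = y
    · have hhit : ((x, y) : ℕ × ℕ).1 = k ∨ ((x, y) : ℕ × ℕ).2 = k := by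
        rcases hkxy with rfl | rfl
        · exact Or.inl rfl
        · exact Or.inr rfl
      refine ⟨(x, y), ⟨Finset.mem_insert_self _ _, hhit⟩, ?_⟩
      rintro q ⟨hq, hqk⟩
      rcases Finset.mem_insert.1 hq with rfl | hq
      · rfl
      · exfalso
        have h := havoid q hq
        rcases hkxy with rfl | rfl <;> tauto
    · push_neg at hkxy
      have hk' : k ∈ (F.erase x).erase y :=
        Finset.mem_erase.2 ⟨hkxy.2, Finset.mem_erase.2 ⟨hkxy.1, hk⟩⟩
      obtain ⟨p0, hp0, hp0u⟩ := hX.2 k hk'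
      refine ⟨p0, ⟨Finset.mem_insert_of_mem hp0.1, hp0.2⟩, ?_⟩
      rintro q ⟨hq, hqk⟩
      rcases Finset.mem_insert.1 hq with rfl | hq
      · exfalso
        have h : x = k ∨ y = k := hqk
        rcases h with h | h
        · exact hkxy.1 h.symm
        · exact hkxy.2 h.symm
      · exact hp0u q ⟨hq, hqk⟩

lemma noncrossing_insert {F : Finset ℕ} {X : Finset (ℕ × ℕ)} {x y : ℕ}
    (hcons : ∀ z ∈ F, ¬(x < z ∧ z < y))
    (hF : ∀ p ∈ X, p.1 ∈ F ∧ p.2 ∈ F) (hX : NonCrossing X) :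
    NonCrossing (insert (x, y) X) := by
  intro p hp q hq
  rcases Finset.mem_insert.1 hp with rfl | hp <;> rcases Finset.mem_insert.1 hq with rfl | hq
  · intro h
    have h1 : x < x := h.1
    omega
  · intro h
    exact hcons q.1 (hF q hq).1 ⟨h.1, h.2.1⟩
  · intro h
    exact hcons p.2 (hF p hp).2 ⟨h.2.1, h.2.2⟩
  · exact hX p hp q hq

lemma type2_insert {X Y : Finset (ℕ × ℕ)} {F : Finset ℕ} {x y : ℕ}
    (hcons : ∀ z ∈ F, ¬(x < z ∧ z < y))
    (havoid : ∀ p ∈ X, p.1 ∈ F ∧ p.1 ≠ x ∧ p.2 ∈ F ∧ p.2 ≠ x)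
    (hmv : Type2Move X Y) : Type2Move (insert (x, y) X) (insert (x, y) Y) := by
  obtain ⟨i, j, i', j', h1, h2, h3, hij', hji', hadj, hEq⟩ := hmv
  have hij'X := havoid _ hij'
  have hji'X := havoid _ hji'
  refine ⟨i, j, i', j', h1, h2, h3, Finset.mem_insert_of_mem hij',
    Finset.mem_insert_of_mem hji', ?_, ?_⟩
  · rintro ⟨q, hq, hq1, hq2, hq3, hq4⟩
    rcases Finset.mem_insert.1 hq with rfl | hq
    · have hx1 : i < x := hq1
      have hx2 : x < j := hq2
      have hy1 : i' < y := hq3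
      have hy2 : y < j' := hq4
      exact hcons j hji'X.1 ⟨hx2, by omega⟩
    · exact hadj ⟨q, hq, hq1, hq2, hq3, hq4⟩
  · have hne1 : ((x, y) : ℕ × ℕ) ≠ (i, j') := by
      intro h
      exact hij'X.2.1 (congrArg Prod.fst h).symm
    have hne2 : ((x, y) : ℕ × ℕ) ≠ (j, i') := by
      intro h
      exact hji'X.2.1 (congrArg Prod.fst h).symm
    rw [hEq, Finset.erase_insert_of_ne hne1, Finset.erase_insert_of_ne hne2,
      Finset.insert_comm ((x, y) : ℕ × ℕ) (i, j), Finset.insert_comm ((x, y) : ℕ × ℕ) (i', j')]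

lemma step_insert {F : Finset ℕ} {x y : ℕ} (hx : x ∈ F) (hy : y ∈ F) (hxy : x < y)
    (hcons : ∀ z ∈ F, ¬(x < z ∧ z < y)) (hcomp : P y = comp (P x))
    {X Y : Finset (ℕ × ℕ)} (hstep : Step P comp ((F.erase x).erase y) X Y) :
    Step P comp F (insert (x, y) X) (insert (x, y) Y) := by
  obtain ⟨hMX, hncX, hMY, hncY, hmv⟩ := hstep
  have havoid : ∀ (Z : Finset (ℕ × ℕ)), MatchOn ((F.erase x).erase y) Z →
      ∀ p ∈ Z, p.1 ∈ F ∧ p.1 ≠ x ∧ p.2 ∈ F ∧ p.2 ≠ x := by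
    intro Z hMZ p hp
    have h := (hMZ.1 p hp).2
    have a1 := Finset.mem_erase.1 h.1
    have a2 := Finset.mem_erase.1 a1.2
    have b1 := Finset.mem_erase.1 h.2
    have b2 := Finset.mem_erase.1 b1.2
    exact ⟨a2.2, a2.1, b2.2, b2.1⟩
  have hval_ins : ∀ Z : Finset (ℕ × ℕ), IsValid P comp Z → IsValid P comp (insert (x, y) Z) := by
    intro Z hZ p hp
    rcases Finset.mem_insert.1 hp with rfl | hp
    · exact hcomp
    · exact hZ p hp
  refine ⟨matchon_insert hx hy hxy hMX,
    noncrossing_insert hcons (fun p hp => ⟨(havoid X hMX p hp).1, (havoid X hMX p hp).2.2.1⟩) hncX,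
    matchon_insert hx hy hxy hMY,
    noncrossing_insert hcons (fun p hp => ⟨(havoid Y hMY p hp).1, (havoid Y hMY p hp).2.2.1⟩) hncY, ?_⟩
  rcases hmv with ⟨hmv, hvX, hvY⟩ | ⟨hmv, hvY, hvX⟩
  · exact Or.inl ⟨type2_insert hcons (havoid X hMX) hmv, hval_ins _ hvX, hval_ins _ hvY⟩
  · exact Or.inr ⟨type2_insert hcons (havoid Y hMY) hmv, hval_ins _ hvY, hval_ins _ hvX⟩

end Connectivity2

section Connectivity3

variable {A : Type*} {P : ℕ → A} {comp : A → A}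

/-- Case: `(x,a), (y,b) ∈ S` with `x < y < b < a` (nested adjacent around the gap). -/
lemma case_two {F : Finset ℕ} {S : Finset (ℕ × ℕ)}
    (hinv : Function.Involutive comp)
    (hM : MatchOn F S) (hnc : NonCrossing S) (hval : IsValid P comp S)
    {x y a b : ℕ} (hcons : ∀ z ∈ F, ¬(x < z ∧ z < y)) (hcomp : P y = comp (P x))
    (hea : (x, a) ∈ S) (heb : (y, b) ∈ S)
    (hxy : x < y) (hyb : y < b) (hba : b < a) :
    ∃ S', Step P comp F S S' ∧ (x, y) ∈ S' ∧
      MatchOn F S' ∧ NonCrossing S' ∧ IsValid P comp S' := by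
  have hne : ((x, a) : ℕ × ℕ) ≠ (y, b) := by
    intro h
    have h1 : x = y := congrArg Prod.fst h
    omega
  have hfacts : ∀ q ∈ (S.erase (x, a)).erase (y, b), q ∈ S ∧ (q.1 < q.2 ∧
      q.1 ≠ x ∧ q.2 ≠ x ∧ q.1 ≠ a ∧ q.2 ≠ a ∧ q.1 ≠ y ∧ q.2 ≠ y ∧ q.1 ≠ b ∧ q.2 ≠ b ∧
      ¬(x < q.1 ∧ q.1 < y) ∧ ¬(x < q.2 ∧ q.2 < y) ∧
      ¬(x < q.1 ∧ q.1 < a ∧ a < q.2) ∧ ¬(q.1 < x ∧ x < q.2 ∧ q.2 < a) ∧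
      ¬(y < q.1 ∧ q.1 < b ∧ b < q.2) ∧ ¬(q.1 < y ∧ y < q.2 ∧ q.2 < b)) := by
    intro q hq
    have h2 := Finset.mem_erase.1 hq
    have h1 := Finset.mem_erase.1 h2.2
    have hqS := h1.2
    have hxa := not_hit hM hea hqS h1.1 (Or.inl rfl)
    have haa := not_hit hM hea hqS h1.1 (Or.inr rfl)
    have hya := not_hit hM heb hqS h2.1 (Or.inl rfl)
    have hbb := not_hit hM heb hqS h2.1 (Or.inr rfl)
    have hbnd := hM.1 q hqS
    exact ⟨hqS, hbnd.1, hxa.1, hxa.2, haa.1, haa.2, hya.1, hya.2, hbb.1, hbb.2,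
      hcons q.1 hbnd.2.1, hcons q.2 hbnd.2.2,
      hnc (x, a) hea q hqS, hnc q hqS (x, a) hea,
      hnc (y, b) heb q hqS, hnc q hqS (y, b) heb⟩
  have hMS' : MatchOn F (insert (x, y) (insert (b, a) ((S.erase (x, a)).erase (y, b)))) := by
    refine rewire hM hea heb hne hxy (by omega) ?_ ⟨by omega, by omega, by omega, by omega⟩
    intro k
    constructor
    · rintro (h | h | h | h)
      · exact Or.inl h
      · exact Or.inr (Or.inr (Or.inl h))
      · exact Or.inr (Or.inr (Or.inr h))
      · exact Or.inr (Or.inl h)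
    · rintro (h | h | h | h)
      · exact Or.inl h
      · exact Or.inr (Or.inr (Or.inr h))
      · exact Or.inr (Or.inl h)
      · exact Or.inr (Or.inr (Or.inl h))
  have hncS' : NonCrossing (insert (x, y) (insert (b, a) ((S.erase (x, a)).erase (y, b)))) := by
    intro p hp q hq
    rcases Finset.mem_insert.1 hp with rfl | hp
    · rcases Finset.mem_insert.1 hq with rfl | hq
      · intro h
        have h1 : x < x := h.1
        omega
      rcases Finset.mem_insert.1 hq with rfl | hq
      · intro h
        have h' : x < b ∧ b < y ∧ y < a := h
        omega
      · intro h
        have h' : x < q.1 ∧ q.1 < y ∧ y < q.2 := h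
        have hf := (hfacts q hq).2
        omega
    rcases Finset.mem_insert.1 hp with rfl | hp
    · rcases Finset.mem_insert.1 hq with rfl | hq
      · intro h
        have h' : b < x ∧ x < a ∧ a < y := h
        omega
      rcases Finset.mem_insert.1 hq with rfl | hq
      · intro h
        have h1 : b < b := h.1
        omega
      · intro h
        have h' : b < q.1 ∧ q.1 < a ∧ a < q.2 := h
        have hf := (hfacts q hq).2
        omega
    · rcases Finset.mem_insert.1 hq with rfl | hq
      · intro h
        have h' : p.1 < x ∧ x < p.2 ∧ p.2 < y := h
        have hf := (hfacts p hp).2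
        omega
      rcases Finset.mem_insert.1 hq with rfl | hq
      · intro h
        have h' : p.1 < b ∧ b < p.2 ∧ p.2 < a := h
        have hf := (hfacts p hp).2
        omega
      · exact hnc p (hfacts p hp).1 q (hfacts q hq).1
  have hvS' : IsValid P comp (insert (x, y) (insert (b, a) ((S.erase (x, a)).erase (y, b)))) := by
    intro p hp
    rcases Finset.mem_insert.1 hp with rfl | hp
    · exact hcomp
    rcases Finset.mem_insert.1 hp with rfl | hp
    · show P a = comp (P b)
      have hPa : P a = comp (P x) := hval (x, a) hea
      have hPb : P b = comp (P y) := hval (y, b) heb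
      rw [hPa, hPb, hinv (P y)]
      exact hcomp.symm
    · exact hval p (hfacts p hp).1
  have hmove : Type2Move S (insert (x, y) (insert (b, a) ((S.erase (x, a)).erase (y, b)))) := by
    refine ⟨x, y, b, a, hxy, hyb, hba, hea, heb, ?_, rfl⟩
    rintro ⟨q, hq, hq1, hq2, hq3, hq4⟩
    exact hcons q.1 (hM.1 q hq).2.1 ⟨hq1, hq2⟩
  exact ⟨_, ⟨hM, hnc, hMS', hncS', Or.inl ⟨hmove, hval, hvS'⟩⟩,
    Finset.mem_insert_self _ _, hMS', hncS', hvS'⟩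

/-- Case: `(b,y), (a,x) ∈ S` with `b < a < x < y` (nested adjacent around the gap). -/
lemma case_three {F : Finset ℕ} {S : Finset (ℕ × ℕ)}
    (hinv : Function.Involutive comp)
    (hM : MatchOn F S) (hnc : NonCrossing S) (hval : IsValid P comp S)
    {x y a b : ℕ} (hcons : ∀ z ∈ F, ¬(x < z ∧ z < y)) (hcomp : P y = comp (P x))
    (hea : (b, y) ∈ S) (heb : (a, x) ∈ S)
    (hba : b < a) (hax : a < x) (hxy : x < y) :
    ∃ S', Step P comp F S S' ∧ (x, y) ∈ S' ∧
      MatchOn F S' ∧ NonCrossing S' ∧ IsValid P comp S' := by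
  have hne : ((b, y) : ℕ × ℕ) ≠ (a, x) := by
    intro h
    have h1 : b = a := congrArg Prod.fst h
    omega
  have hfacts : ∀ q ∈ (S.erase (b, y)).erase (a, x), q ∈ S ∧ (q.1 < q.2 ∧
      q.1 ≠ x ∧ q.2 ≠ x ∧ q.1 ≠ a ∧ q.2 ≠ a ∧ q.1 ≠ y ∧ q.2 ≠ y ∧ q.1 ≠ b ∧ q.2 ≠ b ∧
      ¬(x < q.1 ∧ q.1 < y) ∧ ¬(x < q.2 ∧ q.2 < y) ∧
      ¬(b < q.1 ∧ q.1 < y ∧ y < q.2) ∧ ¬(q.1 < b ∧ b < q.2 ∧ q.2 < y) ∧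
      ¬(a < q.1 ∧ q.1 < x ∧ x < q.2) ∧ ¬(q.1 < a ∧ a < q.2 ∧ q.2 < x)) := by
    intro q hq
    have h2 := Finset.mem_erase.1 hq
    have h1 := Finset.mem_erase.1 h2.2
    have hqS := h1.2
    have hby1 := not_hit hM hea hqS h1.1 (Or.inl rfl)
    have hby2 := not_hit hM hea hqS h1.1 (Or.inr rfl)
    have hax1 := not_hit hM heb hqS h2.1 (Or.inl rfl)
    have hax2 := not_hit hM heb hqS h2.1 (Or.inr rfl)
    have hbnd := hM.1 q hqS
    exact ⟨hqS, hbnd.1, hax2.1, hax2.2, hax1.1, hax1.2, hby2.1, hby2.2, hby1.1, hby1.2,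
      hcons q.1 hbnd.2.1, hcons q.2 hbnd.2.2,
      hnc (b, y) hea q hqS, hnc q hqS (b, y) hea,
      hnc (a, x) heb q hqS, hnc q hqS (a, x) heb⟩
  have hMS' : MatchOn F (insert (b, a) (insert (x, y) ((S.erase (b, y)).erase (a, x)))) := by
    refine rewire hM hea heb hne hba hxy ?_ ⟨by omega, by omega, by omega, by omega⟩
    intro k
    constructor
    · rintro (h | h | h | h)
      · exact Or.inl h
      · exact Or.inr (Or.inr (Or.inl h))
      · exact Or.inr (Or.inr (Or.inr h))
      · exact Or.inr (Or.inl h)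
    · rintro (h | h | h | h)
      · exact Or.inl h
      · exact Or.inr (Or.inr (Or.inr h))
      · exact Or.inr (Or.inl h)
      · exact Or.inr (Or.inr (Or.inl h))
  have hncS' : NonCrossing (insert (b, a) (insert (x, y) ((S.erase (b, y)).erase (a, x)))) := by
    intro p hp q hq
    rcases Finset.mem_insert.1 hp with rfl | hp
    · rcases Finset.mem_insert.1 hq with rfl | hq
      · intro h
        have h1 : b < b := h.1
        omega
      rcases Finset.mem_insert.1 hq with rfl | hq
      · intro h
        have h' : b < x ∧ x < a ∧ a < y := h
        omega
      · intro h
        have h' : b < q.1 ∧ q.1 < a ∧ a < q.2 := h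
        have hf := (hfacts q hq).2
        omega
    rcases Finset.mem_insert.1 hp with rfl | hp
    · rcases Finset.mem_insert.1 hq with rfl | hq
      · intro h
        have h' : x < b ∧ b < y ∧ y < a := h
        omega
      rcases Finset.mem_insert.1 hq with rfl | hq
      · intro h
        have h1 : x < x := h.1
        omega
      · intro h
        have h' : x < q.1 ∧ q.1 < y ∧ y < q.2 := h
        have hf := (hfacts q hq).2
        omega
    · rcases Finset.mem_insert.1 hq with rfl | hq
      · intro h
        have h' : p.1 < b ∧ b < p.2 ∧ p.2 < a := h
        have hf := (hfacts p hp).2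
        omega
      rcases Finset.mem_insert.1 hq with rfl | hq
      · intro h
        have h' : p.1 < x ∧ x < p.2 ∧ p.2 < y := h
        have hf := (hfacts p hp).2
        omega
      · exact hnc p (hfacts p hp).1 q (hfacts q hq).1
  have hvS' : IsValid P comp (insert (b, a) (insert (x, y) ((S.erase (b, y)).erase (a, x)))) := by
    intro p hp
    rcases Finset.mem_insert.1 hp with rfl | hp
    · show P a = comp (P b)
      have hPx : P x = comp (P a) := hval (a, x) heb
      have hPy : P y = comp (P b) := hval (b, y) hea
      rw [← hPy, hcomp, hPx, hinv (P a)]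
    rcases Finset.mem_insert.1 hp with rfl | hp
    · exact hcomp
    · exact hval p (hfacts p hp).1
  have hmove : Type2Move S (insert (b, a) (insert (x, y) ((S.erase (b, y)).erase (a, x)))) := by
    refine ⟨b, a, x, y, hba, hax, hxy, hea, heb, ?_, rfl⟩
    rintro ⟨q, hq, hq1, hq2, hq3, hq4⟩
    exact hcons q.2 (hM.1 q hq).2.2 ⟨hq3, hq4⟩
  exact ⟨_, ⟨hM, hnc, hMS', hncS', Or.inl ⟨hmove, hval, hvS'⟩⟩,
    Finset.mem_insert_of_mem (Finset.mem_insert_self _ _), hMS', hncS', hvS'⟩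

/-- Case: `(a,x), (y,b) ∈ S` with `a < x < y < b` (side by side around the gap);
here the move goes backwards (type 1). -/
lemma case_four {F : Finset ℕ} {S : Finset (ℕ × ℕ)}
    (hinv : Function.Involutive comp)
    (hM : MatchOn F S) (hnc : NonCrossing S) (hval : IsValid P comp S)
    {x y a b : ℕ} (hcons : ∀ z ∈ F, ¬(x < z ∧ z < y)) (hcomp : P y = comp (P x))
    (hea : (a, x) ∈ S) (heb : (y, b) ∈ S)
    (hax : a < x) (hxy : x < y) (hyb : y < b) :
    ∃ S', Step P comp F S S' ∧ (x, y) ∈ S' ∧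
      MatchOn F S' ∧ NonCrossing S' ∧ IsValid P comp S' := by
  have hne : ((a, x) : ℕ × ℕ) ≠ (y, b) := by
    intro h
    have h1 : a = y := congrArg Prod.fst h
    omega
  have hfacts : ∀ q ∈ (S.erase (a, x)).erase (y, b), q ∈ S ∧ (q.1 < q.2 ∧
      q.1 ≠ x ∧ q.2 ≠ x ∧ q.1 ≠ a ∧ q.2 ≠ a ∧ q.1 ≠ y ∧ q.2 ≠ y ∧ q.1 ≠ b ∧ q.2 ≠ b ∧
      ¬(x < q.1 ∧ q.1 < y) ∧ ¬(x < q.2 ∧ q.2 < y) ∧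
      ¬(a < q.1 ∧ q.1 < x ∧ x < q.2) ∧ ¬(q.1 < a ∧ a < q.2 ∧ q.2 < x) ∧
      ¬(y < q.1 ∧ q.1 < b ∧ b < q.2) ∧ ¬(q.1 < y ∧ y < q.2 ∧ q.2 < b)) := by
    intro q hq
    have h2 := Finset.mem_erase.1 hq
    have h1 := Finset.mem_erase.1 h2.2
    have hqS := h1.2
    have hax1 := not_hit hM hea hqS h1.1 (Or.inl rfl)
    have hax2 := not_hit hM hea hqS h1.1 (Or.inr rfl)
    have hyb1 := not_hit hM heb hqS h2.1 (Or.inl rfl)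
    have hyb2 := not_hit hM heb hqS h2.1 (Or.inr rfl)
    have hbnd := hM.1 q hqS
    exact ⟨hqS, hbnd.1, hax2.1, hax2.2, hax1.1, hax1.2, hyb1.1, hyb1.2, hyb2.1, hyb2.2,
      hcons q.1 hbnd.2.1, hcons q.2 hbnd.2.2,
      hnc (a, x) hea q hqS, hnc q hqS (a, x) hea,
      hnc (y, b) heb q hqS, hnc q hqS (y, b) heb⟩
  have hMS' : MatchOn F (insert (a, b) (insert (x, y) ((S.erase (a, x)).erase (y, b)))) := by
    refine rewire hM hea heb hne (by omega) hxy ?_ ⟨by omega, by omega, by omega, by omega⟩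
    intro k
    constructor
    · rintro (h | h | h | h)
      · exact Or.inl h
      · exact Or.inr (Or.inr (Or.inr h))
      · exact Or.inr (Or.inl h)
      · exact Or.inr (Or.inr (Or.inl h))
    · rintro (h | h | h | h)
      · exact Or.inl h
      · exact Or.inr (Or.inr (Or.inl h))
      · exact Or.inr (Or.inr (Or.inr h))
      · exact Or.inr (Or.inl h)
  have hncS' : NonCrossing (insert (a, b) (insert (x, y) ((S.erase (a, x)).erase (y, b)))) := by
    intro p hp q hq
    rcases Finset.mem_insert.1 hp with rfl | hp
    · rcases Finset.mem_insert.1 hq with rfl | hq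
      · intro h
        have h1 : a < a := h.1
        omega
      rcases Finset.mem_insert.1 hq with rfl | hq
      · intro h
        have h' : a < x ∧ x < b ∧ b < y := h
        omega
      · intro h
        have h' : a < q.1 ∧ q.1 < b ∧ b < q.2 := h
        have hf := (hfacts q hq).2
        omega
    rcases Finset.mem_insert.1 hp with rfl | hp
    · rcases Finset.mem_insert.1 hq with rfl | hq
      · intro h
        have h' : x < a ∧ a < y ∧ y < b := h
        omega
      rcases Finset.mem_insert.1 hq with rfl | hq
      · intro h
        have h1 : x < x := h.1
        omega
      · intro h
        have h' : x < q.1 ∧ q.1 < y ∧ y < q.2 := h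
        have hf := (hfacts q hq).2
        omega
    · rcases Finset.mem_insert.1 hq with rfl | hq
      · intro h
        have h' : p.1 < a ∧ a < p.2 ∧ p.2 < b := h
        have hf := (hfacts p hp).2
        omega
      rcases Finset.mem_insert.1 hq with rfl | hq
      · intro h
        have h' : p.1 < x ∧ x < p.2 ∧ p.2 < y := h
        have hf := (hfacts p hp).2
        omega
      · exact hnc p (hfacts p hp).1 q (hfacts q hq).1
  have hvS' : IsValid P comp (insert (a, b) (insert (x, y) ((S.erase (a, x)).erase (y, b)))) := by
    intro p hp
    rcases Finset.mem_insert.1 hp with rfl | hp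
    · show P b = comp (P a)
      have hPx : P x = comp (P a) := hval (a, x) hea
      have hPb : P b = comp (P y) := hval (y, b) heb
      rw [hPb, hcomp, hinv (P x)]
      exact hPx
    rcases Finset.mem_insert.1 hp with rfl | hp
    · exact hcomp
    · exact hval p (hfacts p hp).1
  have hnm1 : ((a, b) : ℕ × ℕ) ∉ insert ((x, y) : ℕ × ℕ) ((S.erase (a, x)).erase (y, b)) := by
    intro h
    rcases Finset.mem_insert.1 h with h | h
    · have h1 : a = x := congrArg Prod.fst h
      omega
    · have h1 := hit_unique hM (hfacts _ h).1 hea (Or.inl rfl) (Or.inl rfl)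
      have h2 : b = x := congrArg Prod.snd h1
      omega
  have hnm2 : ((x, y) : ℕ × ℕ) ∉ (S.erase (a, x)).erase (y, b) := by
    intro h
    have h1 := hit_unique hM (hfacts _ h).1 hea (Or.inl rfl) (Or.inr rfl)
    have h2 : x = a := congrArg Prod.fst h1
    omega
  have hybS : ((y, b) : ℕ × ℕ) ∈ S.erase (a, x) := by
    refine Finset.mem_erase.2 ⟨?_, heb⟩
    intro h
    have h1 : y = a := congrArg Prod.fst h
    omega
  have hmove : Type2Move (insert (a, b) (insert (x, y) ((S.erase (a, x)).erase (y, b)))) S := by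
    refine ⟨a, x, y, b, hax, hxy, hyb, Finset.mem_insert_self _ _,
      Finset.mem_insert_of_mem (Finset.mem_insert_self _ _), ?_, ?_⟩
    · rintro ⟨q, hq, hq1, hq2, hq3, hq4⟩
      rcases Finset.mem_insert.1 hq with rfl | hq
      · have h1 : a < a := hq1
        omega
      rcases Finset.mem_insert.1 hq with rfl | hq
      · have h1 : a < x := hq1
        have h2 : x < x := hq2
        omega
      · have hf := (hfacts q hq).2
        have h5 : ¬(a < q.1 ∧ q.1 < x ∧ x < q.2) := hnc (a, x) hea q (hfacts q hq).1
        have hb1 : y < q.2 := hq3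
        omega
    · rw [Finset.erase_insert hnm1, Finset.erase_insert hnm2,
        Finset.insert_erase hybS, Finset.insert_erase hea]
  exact ⟨_, ⟨hM, hnc, hMS', hncS', Or.inr ⟨hmove, hvS', hval⟩⟩,
    Finset.mem_insert_of_mem (Finset.mem_insert_self _ _), hMS', hncS', hvS'⟩

end Connectivity3

section Connectivity4

variable {A : Type*} {P : ℕ → A} {comp : A → A}

lemma one_move {F : Finset ℕ} {S : Finset (ℕ × ℕ)}
    (hinv : Function.Involutive comp)
    (hM : MatchOn F S) (hnc : NonCrossing S) (hval : IsValid P comp S)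
    {x y : ℕ} (hx : x ∈ F) (hy : y ∈ F) (hxy : x < y)
    (hcons : ∀ z ∈ F, ¬(x < z ∧ z < y)) (hcomp : P y = comp (P x)) :
    ∃ S', Relation.ReflTransGen (Step P comp F) S S' ∧ (x, y) ∈ S' ∧
      MatchOn F S' ∧ NonCrossing S' ∧ IsValid P comp S' := by
  obtain ⟨⟨u1, u2⟩, hpxS, hpxk0⟩ := exists_hit hM hx
  obtain ⟨⟨v1, v2⟩, hpyS, hpyk0⟩ := exists_hit hM hy
  have hpxk : u1 = x ∨ u2 = x := hpxk0
  have hpyk : v1 = y ∨ v2 = y := hpyk0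
  have hult : u1 < u2 := (hM.1 _ hpxS).1
  have hvlt : v1 < v2 := (hM.1 _ hpyS).1
  by_cases hsame : ((u1, u2) : ℕ × ℕ) = (v1, v2)
  · have hv1 : v1 = u1 := (congrArg Prod.fst hsame).symm
    have hv2 : v2 = u2 := (congrArg Prod.snd hsame).symm
    have he1 : u1 = x := by
      rcases hpxk with h | h
      · exact h
      · rcases hpyk with h' | h' <;> omega
    have he2 : u2 = y := by
      rcases hpyk with h' | h' <;> omega
    refine ⟨S, Relation.ReflTransGen.refl, ?_, hM, hnc, hval⟩
    rw [← he1, ← he2]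
    exact hpxS
  · have hnevu : ((v1, v2) : ℕ × ℕ) ≠ (u1, u2) := fun h => hsame h.symm
    have hxhit : v1 ≠ x ∧ v2 ≠ x := not_hit hM hpxS hpyS hnevu hpxk0
    have hyhit : u1 ≠ y ∧ u2 ≠ y := not_hit hM hpyS hpxS hsame hpyk0
    have hu1hit : v1 ≠ u1 ∧ v2 ≠ u1 := not_hit hM hpxS hpyS hnevu (Or.inl rfl)
    have hu2hit : v1 ≠ u2 ∧ v2 ≠ u2 := not_hit hM hpxS hpyS hnevu (Or.inr rfl)
    have hu1F : u1 ∈ F := (hM.1 _ hpxS).2.1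
    have hu2F : u2 ∈ F := (hM.1 _ hpxS).2.2
    have hv1F : v1 ∈ F := (hM.1 _ hpyS).2.1
    have hv2F : v2 ∈ F := (hM.1 _ hpyS).2.2
    have hgu1 : ¬(x < u1 ∧ u1 < y) := hcons u1 hu1F
    have hgu2 : ¬(x < u2 ∧ u2 < y) := hcons u2 hu2F
    have hgv1 : ¬(x < v1 ∧ v1 < y) := hcons v1 hv1F
    have hgv2 : ¬(x < v2 ∧ v2 < y) := hcons v2 hv2F
    have hcr1 : ¬(u1 < v1 ∧ v1 < u2 ∧ u2 < v2) := hnc _ hpxS _ hpyS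
    have hcr2 : ¬(v1 < u1 ∧ u1 < v2 ∧ v2 < u2) := hnc _ hpyS _ hpxS
    rcases hpxk with hux | hux <;> rcases hpyk with hvy | hvy
    · -- u1 = x, v1 = y : case_two with a = u2, b = v2
      rw [hux] at hpxS
      rw [hvy] at hpyS
      obtain ⟨S', hstep, h1, h2, h3, h4⟩ :=
        case_two hinv hM hnc hval hcons hcomp hpxS hpyS hxy (by omega) (by omega)
      exact ⟨S', Relation.ReflTransGen.single hstep, h1, h2, h3, h4⟩
    · -- u1 = x, v2 = y : impossible
      exfalso
      omega
    · -- u2 = x, v1 = y : case_four with a = u1, b = v2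
      rw [hux] at hpxS
      rw [hvy] at hpyS
      obtain ⟨S', hstep, h1, h2, h3, h4⟩ :=
        case_four hinv hM hnc hval hcons hcomp hpxS hpyS (by omega) hxy (by omega)
      exact ⟨S', Relation.ReflTransGen.single hstep, h1, h2, h3, h4⟩
    · -- u2 = x, v2 = y : case_three with a = u1, b = v1
      rw [hvy] at hpyS
      rw [hux] at hpxS
      obtain ⟨S', hstep, h1, h2, h3, h4⟩ :=
        case_three hinv hM hnc hval hcons hcomp hpyS hpxS (by omega) (by omega) hxy
      exact ⟨S', Relation.ReflTransGen.single hstep, h1, h2, h3, h4⟩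

lemma connected_general (hinv : Function.Involutive comp) :
    ∀ (N : ℕ) (F : Finset ℕ) (S T : Finset (ℕ × ℕ)), F.card ≤ N →
      MatchOn F S → NonCrossing S → IsValid P comp S →
      MatchOn F T → NonCrossing T → IsValid P comp T →
      Relation.ReflTransGen (Step P comp F) S T := by
  intro N
  induction N with
  | zero =>
    intro F S T hcard hMS _ _ hMT _ _
    have hF : F = ∅ := Finset.card_eq_zero.1 (Nat.le_zero.1 hcard)
    subst hF
    have hS : S = ∅ := Finset.eq_empty_of_forall_notMem
      (fun p hp => absurd (hMS.1 p hp).2.1 (Finset.notMem_empty _))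
    have hT : T = ∅ := Finset.eq_empty_of_forall_notMem
      (fun p hp => absurd (hMT.1 p hp).2.1 (Finset.notMem_empty _))
    rw [hS, hT]
  | succ N ih =>
    intro F S T hcard hMS hncS hvS hMT hncT hvT
    rcases Finset.eq_empty_or_nonempty F with rfl | ⟨k, hk⟩
    · have hS : S = ∅ := Finset.eq_empty_of_forall_notMem
        (fun p hp => absurd (hMS.1 p hp).2.1 (Finset.notMem_empty _))
      have hT : T = ∅ := Finset.eq_empty_of_forall_notMem
        (fun p hp => absurd (hMT.1 p hp).2.1 (Finset.notMem_empty _))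
      rw [hS, hT]
    · have hTne : T.Nonempty := by
        obtain ⟨e0, he0, -⟩ := exists_hit hMT hk
        exact ⟨e0, he0⟩
      obtain ⟨e, heT, hemin⟩ := Finset.exists_min_image T (fun p => p.2 - p.1) hTne
      obtain ⟨x, y⟩ := e
      have hlt : x < y := (hMT.1 _ heT).1
      have hxF : x ∈ F := (hMT.1 _ heT).2.1
      have hyF : y ∈ F := (hMT.1 _ heT).2.2
      have hcons : ∀ z ∈ F, ¬(x < z ∧ z < y) := by
        rintro z hz ⟨hz1, hz2⟩
        obtain ⟨q, hqT, hqz⟩ := exists_hit hMT hz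
        have hqlt : q.1 < q.2 := (hMT.1 q hqT).1
        have hqne : q ≠ (x, y) := by
          rintro rfl
          have h : x = z ∨ y = z := hqz
          omega
        have hnc1 : ¬(x < q.1 ∧ q.1 < y ∧ y < q.2) := hncT (x, y) heT q hqT
        have hnc2 : ¬(q.1 < x ∧ x < q.2 ∧ q.2 < y) := hncT q hqT (x, y) heT
        have hq1x : q.1 ≠ x ∧ q.2 ≠ x := not_hit hMT heT hqT hqne (Or.inl rfl)
        have hq1y : q.1 ≠ y ∧ q.2 ≠ y := not_hit hMT heT hqT hqne (Or.inr rfl)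
        have hmin : y - x ≤ q.2 - q.1 := hemin q hqT
        have hqz' : q.1 = z ∨ q.2 = z := hqz
        omega
      have hcomp : P y = comp (P x) := hvT (x, y) heT
      obtain ⟨S', hpath1, hxyS', hMS', hncS', hvS'⟩ :=
        one_move hinv hMS hncS hvS hxF hyF hlt hcons hcomp
      have hMS'' := matchon_erase hMS' hxyS'
      have hMT'' := matchon_erase hMT heT
      have hncS'' : NonCrossing (S'.erase (x, y)) :=
        fun p hp q hq => hncS' p (Finset.mem_erase.1 hp).2 q (Finset.mem_erase.1 hq).2
      have hncT'' : NonCrossing (T.erase (x, y)) :=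
        fun p hp q hq => hncT p (Finset.mem_erase.1 hp).2 q (Finset.mem_erase.1 hq).2
      have hvS'' : IsValid P comp (S'.erase (x, y)) :=
        fun p hp => hvS' p (Finset.mem_erase.1 hp).2
      have hvT'' : IsValid P comp (T.erase (x, y)) :=
        fun p hp => hvT p (Finset.mem_erase.1 hp).2
      have hcard' : ((F.erase x).erase y).card ≤ N := by
        have h1 : y ∈ F.erase x := Finset.mem_erase.2 ⟨by omega, hyF⟩
        rw [Finset.card_erase_of_mem h1, Finset.card_erase_of_mem hxF]
        have h2 : 0 < F.card := Finset.card_pos.2 ⟨k, hk⟩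
        omega
      have hpath2 := ih ((F.erase x).erase y) (S'.erase (x, y)) (T.erase (x, y)) hcard'
        hMS'' hncS'' hvS'' hMT'' hncT'' hvT''
      have hpath3 : Relation.ReflTransGen (Step P comp F)
          (insert (x, y) (S'.erase (x, y))) (insert (x, y) (T.erase (x, y))) :=
        Relation.ReflTransGen.lift (fun Z => insert ((x, y) : ℕ × ℕ) Z)
          (fun a b h => step_insert hxF hyF hlt hcons hcomp h) _ _ hpath2
      rw [Finset.insert_erase hxyS', Finset.insert_erase heT] at hpath3
      exact hpath1.trans hpath3

end Connectivity4

/-- The graph `G_P`, whose vertices are the `P`-valid plane trees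
and whose edges are valid local moves (a type 1 move is the inverse of a type 2
move, so an undirected edge joins `X` and `Y` iff a valid type 2 move goes one
way or the other), is connected. -/
theorem valid_tree_graph_connected {A : Type*}
    (comp : A → A) (hinv : Function.Involutive comp) (hff : ∀ a, comp a ≠ a)
    (n : ℕ) (P : ℕ → A) (S T : Finset (ℕ × ℕ))
    (hS : IsPlaneTree n S) (hSval : IsValid P comp S)
    (hT : IsPlaneTree n T) (hTval : IsValid P comp T) :
    Relation.ReflTransGen
      (fun X Y => IsPlaneTree n X ∧ IsPlaneTree n Y ∧
        (ValidType2Move P comp X Y ∨ ValidType2Move P comp Y X)) S T := by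
  have toM : ∀ Z : Finset (ℕ × ℕ), IsPlaneTree n Z → MatchOn (Finset.range (2 * n)) Z := by
    intro Z hZ
    constructor
    · intro p hp
      obtain ⟨h1, h2⟩ := hZ.1.1 p hp
      exact ⟨h1, Finset.mem_range.2 (h1.trans h2), Finset.mem_range.2 h2⟩
    · intro k hk
      exact hZ.1.2 k (Finset.mem_range.1 hk)
  have toPT : ∀ Z : Finset (ℕ × ℕ), MatchOn (Finset.range (2 * n)) Z → NonCrossing Z →
      IsPlaneTree n Z := by
    intro Z hMZ hncZ
    refine ⟨⟨fun p hp => ⟨(hMZ.1 p hp).1, Finset.mem_range.1 (hMZ.1 p hp).2.2⟩,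
      fun k hk => hMZ.2 k (Finset.mem_range.2 hk)⟩, hncZ⟩
  have h := connected_general hinv (2 * n) (Finset.range (2 * n)) S T
    (by simp) (toM S hS) hS.2 hSval (toM T hT) hT.2 hTval
  refine Relation.ReflTransGen.mono ?_ _ _ h
  rintro X Y ⟨hMX, hncX, hMY, hncY, hor⟩
  exact ⟨toPT X hMX hncX, toPT Y hMY hncY, hor⟩
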